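/- Let Q(x) = x^2 - p x + q with Δ = p^2 - 4q ≠ 0 and F = -1/Q. Then at every point where Q ≠ 0, Δ^3 * F^4 = (1/6) * (Q')^3 * F''' + 5 * (Q')^2 * F'' + 38 * Q' * F' + 64 * F. -/

import Mathlib

theorem F_fourth_eq (p q : ℝ) (hΔ : p ^ 2 - 4 * q ≠ 0)
    (Q F : ℝ → ℝ) (hQ : ∀ x, Q x = x ^ 2 - p * x + q)
    (hF : ∀ x, F x = -1 / Q x) :
    ∀ x, Q x ≠ 0 →
      (p ^ 2 - 4 * q) ^ 3 * (F x) ^ 4 =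
        (1 / 6) * (deriv Q x) ^ 3 * deriv (deriv (deriv F)) x
          + 5 * (deriv Q x) ^ 2 * deriv (deriv F) x
          + 38 * deriv Q x * deriv F x + 64 * F x := by
  have hFe : F = fun x => -1 / Q x := funext hF
  subst hFe
  have hQe : Q = fun x => x ^ 2 - p * x + q := funext hQ
  subst hQe
  set Qf : ℝ → ℝ := fun x => x ^ 2 - p * x + q with hQf
  have hQd : ∀ y : ℝ, HasDerivAt Qf (2 * y - p) y := by
    intro y
    have h := (((hasDerivAt_id y).pow 2).sub ((hasDerivAt_id y).const_mul p)).add_const q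
    convert h using 1
    · rfl
    · rfl
    · rfl
    · simp [id]
  have hQcont : Continuous Qf := by
    have : ∀ y, ContinuousAt Qf y := fun y => (hQd y).continuousAt
    exact continuous_iff_continuousAt.mpr this
  have hne : ∀ y : ℝ, Qf y ≠ 0 → ∀ᶠ z in nhds y, Qf z ≠ 0 := fun y hy =>
    hQcont.continuousAt.eventually_ne hy
  -- first derivative
  have h1d : ∀ y : ℝ, Qf y ≠ 0 →
      HasDerivAt (fun z => -1 / Qf z) ((2 * y - p) / Qf y ^ 2) y := by
    intro y hy
    have h := (hasDerivAt_const y (-1 : ℝ)).div (hQd y) hy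
    convert h using 1
    · rfl
    · rfl
    · rfl
    · ring
  have h1 : ∀ y : ℝ, Qf y ≠ 0 → deriv (fun z => -1 / Qf z) y = (2 * y - p) / Qf y ^ 2 :=
    fun y hy => (h1d y hy).deriv
  -- second derivative
  have h2d : ∀ y : ℝ, Qf y ≠ 0 →
      HasDerivAt (fun z => (2 * z - p) / Qf z ^ 2)
        ((2 * Qf y - 2 * (2 * y - p) ^ 2) / Qf y ^ 3) y := by
    intro y hy
    have hnum : HasDerivAt (fun z : ℝ => 2 * z - p) 2 y := by
      have h := ((hasDerivAt_id y).const_mul 2).sub_const p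
      simpa using h
    have hden : HasDerivAt (fun z => Qf z ^ 2) (2 * Qf y ^ 1 * (2 * y - p)) y :=
      (hQd y).pow 2
    have h := hnum.div hden (pow_ne_zero 2 hy)
    convert h using 1
    · rfl
    · rfl
    · rfl
    · field_simp
  have h2 : ∀ y : ℝ, Qf y ≠ 0 →
      deriv (deriv (fun z => -1 / Qf z)) y = (2 * Qf y - 2 * (2 * y - p) ^ 2) / Qf y ^ 3 := by
    intro y hy
    have heq : deriv (fun z => -1 / Qf z) =ᶠ[nhds y] fun z => (2 * z - p) / Qf z ^ 2 :=
      (hne y hy).mono fun z hz => h1 z hz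
    rw [heq.deriv_eq]
    exact (h2d y hy).deriv
  -- third derivative
  have h3d : ∀ y : ℝ, Qf y ≠ 0 →
      HasDerivAt (fun z => (2 * Qf z - 2 * (2 * z - p) ^ 2) / Qf z ^ 3)
        ((6 * (2 * y - p) ^ 3 - 12 * (2 * y - p) * Qf y) / Qf y ^ 4) y := by
    intro y hy
    have hD : HasDerivAt (fun z : ℝ => 2 * z - p) 2 y := by
      have h := ((hasDerivAt_id y).const_mul 2).sub_const p
      simpa using h
    have hnum : HasDerivAt (fun z => 2 * Qf z - 2 * (2 * z - p) ^ 2)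
        (2 * (2 * y - p) - 2 * (2 * (2 * y - p) ^ 1 * 2)) y :=
      ((hQd y).const_mul 2).sub ((hD.pow 2).const_mul 2)
    have hden : HasDerivAt (fun z => Qf z ^ 3) (3 * Qf y ^ 2 * (2 * y - p)) y :=
      (hQd y).pow 3
    have h := hnum.div hden (pow_ne_zero 3 hy)
    convert h using 1
    · rfl
    · rfl
    · rfl
    · field_simp
      ring
  have h3 : ∀ y : ℝ, Qf y ≠ 0 →
      deriv (deriv (deriv (fun z => -1 / Qf z))) y =
        (6 * (2 * y - p) ^ 3 - 12 * (2 * y - p) * Qf y) / Qf y ^ 4 := by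
    intro y hy
    have heq : deriv (deriv (fun z => -1 / Qf z)) =ᶠ[nhds y]
        fun z => (2 * Qf z - 2 * (2 * z - p) ^ 2) / Qf z ^ 3 :=
      (hne y hy).mono fun z hz => h2 z hz
    rw [heq.deriv_eq]
    exact (h3d y hy).deriv
  intro x hx
  rw [h1 x hx, h2 x hx, h3 x hx, (hQd x).deriv]
  have hQx : Qf x = x ^ 2 - p * x + q := rfl
  have hΔ' : (2 * x - p) ^ 2 - 4 * Qf x = p ^ 2 - 4 * q := by rw [hQx]; ring
  field_simp
  rw [← hΔ']
  ring
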